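/- Let L > 0 be real, let B ≥ 2 be an integer, and let s ∈ ℂ with Re(s) > 1/2. Then ∑_{n=1}^∞ (nπ/L)^{−2s} + (B−1)·∑_{m=0}^∞ ((2m+1)π/(2L))^{−2s} = (π/L)^{−2s} · ((B−1)·2^{2s} − B + 2) · ζ(2s), where ζ is the Riemann zeta function. (This is the spectral zeta function of the star graph with B bonds of equal length L, Neumann matching conditions at the center and Neumann conditions at the nodes, whose k-spectrum consists of the points nπ/L with multiplicity 1 and (2m+1)π/(2L) with multiplicity B−1.) -/

import Mathlib

open Real Complex BigOperators

/-- for `L > 0`, `B ≥ 2` and `Re s > 1/2`, the spectral zeta function of the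
equal-bond-length Neumann star graph:
`∑_{n≥1} (nπ/L)^{−2s} + (B−1) ∑_{m≥0} ((2m+1)π/(2L))^{−2s}
  = (π/L)^{−2s} ((B−1) 2^{2s} − B + 2) ζ(2s)`. -/
theorem neumann_star_equal_lengths_zeta (L : ℝ) (hL : 0 < L) (B : ℕ) (hB : 2 ≤ B)
    (s : ℂ) (hs : 1 / 2 < s.re) :
    (∑' n : ℕ, (((n + 1) * Real.pi / L : ℝ) : ℂ) ^ (-2 * s)) +
      ((B : ℂ) - 1) * ∑' m : ℕ, (((2 * m + 1) * Real.pi / (2 * L) : ℝ) : ℂ) ^ (-2 * s) =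
      ((Real.pi / L : ℝ) : ℂ) ^ (-2 * s) *
        (((B : ℂ) - 1) * (2 : ℂ) ^ (2 * s) - (B : ℂ) + 2) * riemannZeta (2 * s) := by
  set t : ℂ := 2 * s with ht
  have htre : 1 < t.re := by
    have : t.re = 2 * s.re := by simp [ht, Complex.mul_re]
    rw [this]; linarith
  have ht0 : t ≠ 0 := by
    intro h; rw [h] at htre; simp at htre; linarith
  have htne : -t ≠ 0 := neg_ne_zero.mpr ht0
  have hπL : (0:ℝ) < Real.pi / L := div_pos Real.pi_pos hL
  set c : ℂ := ((Real.pi / L : ℝ) : ℂ) ^ (-t) with hc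
  have hsum : Summable fun n : ℕ => ((n:ℂ)) ^ (-t) := by
    simpa [Complex.cpow_neg, one_div] using Complex.summable_one_div_nat_cpow.mpr htre
  have hzeta : ∑' n : ℕ, ((n:ℂ)) ^ (-t) = riemannZeta t := by
    rw [zeta_eq_tsum_one_div_nat_cpow htre]
    simp [Complex.cpow_neg, one_div]
  have heven : ∀ k : ℕ, (((2*k:ℕ):ℂ)) ^ (-t) = (2:ℂ)^(-t) * ((k:ℂ))^(-t) := by
    intro k
    have h1 : ((2*k:ℕ):ℂ) = (((2:ℝ)*(k:ℝ) : ℝ):ℂ) := by push_cast; ring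
    rw [h1, Complex.ofReal_mul, mul_cpow_ofReal_nonneg (by norm_num) k.cast_nonneg]
    norm_num
  have he : Summable fun k : ℕ => (((2*k:ℕ):ℂ)) ^ (-t) := by
    simp only [heven]; exact hsum.mul_left _
  have hinj : Function.Injective (fun k : ℕ => 2*k+1) := fun a b hab => by
    simp only [] at hab; omega
  have ho : Summable fun k : ℕ => (((2*k+1:ℕ):ℂ)) ^ (-t) := by
    have h := hsum.comp_injective hinj
    simp only [Function.comp_def] at h
    convert h using 2 with k
  have hodd : ∑' k : ℕ, (((2*k+1:ℕ):ℂ)) ^ (-t) = (1 - (2:ℂ)^(-t)) * riemannZeta t := by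
    have key := tsum_even_add_odd (f := fun n : ℕ => ((n:ℂ))^(-t)) he ho
    rw [hzeta] at key
    have heq : ∑' k : ℕ, (((2*k:ℕ):ℂ)) ^ (-t) = (2:ℂ)^(-t) * riemannZeta t := by
      simp only [heven]; rw [tsum_mul_left, hzeta]
    rw [heq] at key
    linear_combination key
  have hS1 : ∑' n : ℕ, (((n + 1) * Real.pi / L : ℝ) : ℂ) ^ (-t) = riemannZeta t * c := by
    have step : ∀ n : ℕ, (((n + 1) * Real.pi / L : ℝ) : ℂ) ^ (-t)
        = (((n+1:ℕ):ℂ))^(-t) * c := by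
      intro n
      have h1 : ((n + 1) * Real.pi / L : ℝ) = (((n+1:ℕ)):ℝ) * (Real.pi / L) := by
        push_cast; ring
      rw [h1, Complex.ofReal_mul, mul_cpow_ofReal_nonneg (by positivity) hπL.le, hc]
      push_cast; ring
    rw [tsum_congr step, tsum_mul_right]
    congr 1
    rw [← hzeta, Summable.tsum_eq_zero_add hsum]
    simp [Complex.zero_cpow htne]
  set d : ℂ := ((Real.pi / (2*L) : ℝ) : ℂ) ^ (-t) with hdd
  have hS2 : ∑' m : ℕ, (((2 * m + 1) * Real.pi / (2 * L) : ℝ) : ℂ) ^ (-t)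
      = (1 - (2:ℂ)^(-t)) * riemannZeta t * d := by
    have step : ∀ m : ℕ, (((2 * m + 1) * Real.pi / (2 * L) : ℝ) : ℂ) ^ (-t)
        = (((2*m+1:ℕ):ℂ))^(-t) * d := by
      intro m
      have h1 : ((2 * m + 1) * Real.pi / (2 * L) : ℝ)
          = (((2*m+1:ℕ)):ℝ) * (Real.pi / (2*L)) := by push_cast; ring
      rw [h1, Complex.ofReal_mul, mul_cpow_ofReal_nonneg (by positivity) (by positivity), hdd]
      push_cast; ring
    rw [tsum_congr step, tsum_mul_right, hodd]
  have harg : (2:ℂ).arg ≠ Real.pi := by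
    rw [Complex.ofNat_arg]
    exact Real.pi_pos.ne
  have hd : d = c * (2:ℂ)^t := by
    have h1 : (Real.pi/(2*L) : ℝ) = (Real.pi/L) * (2⁻¹:ℝ) := by ring
    rw [hdd, h1, Complex.ofReal_mul, mul_cpow_ofReal_nonneg hπL.le (by norm_num)]
    congr 1
    rw [show (((2⁻¹:ℝ)):ℂ) = (2:ℂ)⁻¹ by norm_num, Complex.inv_cpow _ _ harg,
      Complex.cpow_neg, inv_inv]
  have h2 : (2:ℂ)^(-t) * (2:ℂ)^t = 1 := by
    rw [← Complex.cpow_add _ _ two_ne_zero]; simp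
  have hneg : (-2 : ℂ) * s = -t := by rw [ht]; ring
  simp only [hneg, ← ht, ← hc]
  rw [hS1, hS2, hd]
  linear_combination ((1-(B:ℂ)) * riemannZeta t * c) * h2
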